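/- Rademacher complexity of maxima: Let F be a family of real-valued functions on X and G = { x ↦ max(f_1(x), ..., f_k(x)) : f_1, ..., f_k ∈ F }. Then for any finite sample S of size m, the empirical Rademacher complexity satisfies R̂_S(G) ≤ k · R̂_S(F). -/

import Mathlib

/-- Empirical Rademacher complexity of a family `H` of real-valued functions on a sample
`S = (z_1, …, z_m)`: `E_σ[sup_{h∈H} (1/m) Σ_t σ_t h(z_t)]`, the expectation taken over
independent uniform random signs `σ ∈ {−1,+1}^m` (encoded by `Fin m → Bool`). -/
noncomputable def rademacher {X : Type*} (m : ℕ) (S : Fin m → X) (H : Set (X → ℝ)) : ℝ :=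
  (∑ σ : Fin m → Bool, sSup {v : ℝ | ∃ h ∈ H,
      v = (m : ℝ)⁻¹ * ∑ t, (if σ t then (1 : ℝ) else -1) * h (S t)}) / 2 ^ m

namespace RadMax

variable {m : ℕ}

def sgn (σ : Fin m → Bool) (t : Fin m) : ℝ := if σ t then 1 else -1

lemma abs_sgn (σ : Fin m → Bool) (t : Fin m) : |sgn σ t| = 1 := by
  unfold sgn; split <;> norm_num

def rs (σ : Fin m → Bool) (a : Fin m → ℝ) : ℝ := ∑ t, sgn σ t * a t

def g (T : Finset (Fin m)) (σ : Fin m → Bool) (a : Fin m → ℝ) : ℝ :=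
  ∑ t, sgn σ t * (if t ∈ T then a t else |a t|)

lemma g_univ (σ : Fin m → Bool) (a : Fin m → ℝ) : g Finset.univ σ a = rs σ a := by
  simp [g, rs]

lemma g_empty (σ : Fin m → Bool) (a : Fin m → ℝ) : g ∅ σ a = rs σ (fun t => |a t|) := by
  simp [g, rs]

def Bdd (A : Set (Fin m → ℝ)) : Prop := ∃ C : ℝ, ∀ a ∈ A, ∀ t, |a t| ≤ C

lemma g_le {A : Set (Fin m → ℝ)} {C : ℝ} (hA : ∀ a ∈ A, ∀ t, |a t| ≤ C)
    {a : Fin m → ℝ} (ha : a ∈ A) (T : Finset (Fin m)) (σ : Fin m → Bool) :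
    g T σ a ≤ m * C := by
  calc g T σ a ≤ ∑ _t : Fin m, C := by
        refine Finset.sum_le_sum fun t _ => ?_
        have h1 : |a t| ≤ C := hA a ha t
        have h2 : |sgn σ t * (if t ∈ T then a t else |a t|)| ≤ C := by
          rw [abs_mul, abs_sgn, one_mul]
          split
          · exact h1
          · rwa [abs_abs]
        exact le_trans (le_abs_self _) h2
    _ = m * C := by simp [mul_comm]

lemma bddAbove_g {A : Set (Fin m → ℝ)} (hA : Bdd A) (T : Finset (Fin m)) (σ : Fin m → Bool) :
    BddAbove (g T σ '' A) := by
  obtain ⟨C, hC⟩ := hA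
  exact ⟨m * C, by rintro v ⟨a, ha, rfl⟩; exact g_le hC ha T σ⟩

lemma abs_pair_le {ι : Type*} [Nonempty ι] (u x : ι → ℝ)
    (hp : BddAbove (Set.range fun i => u i + x i))
    (hm : BddAbove (Set.range fun i => u i - x i)) :
    sSup (Set.range fun i => u i + |x i|) + sSup (Set.range fun i => u i - |x i|)
      ≤ sSup (Set.range fun i => u i + x i) + sSup (Set.range fun i => u i - x i) := by
  set R := sSup (Set.range fun i => u i + x i) + sSup (Set.range fun i => u i - x i) with hR
  have key : ∀ i j : ι, (u i + |x i|) + (u j - |x j|) ≤ R := by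
    intro i j
    rcases le_total (x j) (x i) with h | h
    · have habs : |x i| - |x j| ≤ x i - x j := by
        have h2 := abs_sub_abs_le_abs_sub (x i) (x j)
        rwa [abs_of_nonneg (sub_nonneg.2 h)] at h2
      have hi := le_csSup hp (Set.mem_range_self i)
      have hj := le_csSup hm (Set.mem_range_self j)
      linarith
    · have habs : |x i| - |x j| ≤ x j - x i := by
        have h2 := abs_sub_abs_le_abs_sub (x i) (x j)
        rwa [abs_sub_comm, abs_of_nonneg (sub_nonneg.2 h)] at h2
      have hi := le_csSup hp (Set.mem_range_self j)
      have hj := le_csSup hm (Set.mem_range_self i)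
      linarith
  have h3 : ∀ i : ι, sSup (Set.range fun j => u j - |x j|) ≤ R - (u i + |x i|) := by
    intro i
    refine csSup_le (Set.range_nonempty _) ?_
    rintro v ⟨j, rfl⟩
    dsimp only
    have := key i j
    linarith
  have h4 : sSup (Set.range fun i => u i + |x i|) ≤ R - sSup (Set.range fun j => u j - |x j|) := by
    refine csSup_le (Set.range_nonempty _) ?_
    rintro v ⟨i, rfl⟩
    dsimp only
    have := h3 i
    linarith
  linarith


def flip (t₀ : Fin m) (σ : Fin m → Bool) : Fin m → Bool := Function.update σ t₀ (!σ t₀)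

lemma flip_involutive (t₀ : Fin m) : Function.Involutive (flip t₀) := by
  intro σ
  funext t
  by_cases h : t = t₀
  · subst h; simp [flip]
  · simp [flip, Function.update_of_ne h]

lemma sgn_flip_ne (t₀ : Fin m) (σ : Fin m → Bool) {t : Fin m} (h : t ≠ t₀) :
    sgn (flip t₀ σ) t = sgn σ t := by
  simp [sgn, flip, Function.update_of_ne h]

lemma sgn_flip_self (t₀ : Fin m) (σ : Fin m → Bool) :
    sgn (flip t₀ σ) t₀ = -sgn σ t₀ := by
  cases h : σ t₀ <;> simp [sgn, flip, h]

lemma step {A : Set (Fin m → ℝ)} (hne : A.Nonempty) (hA : Bdd A)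
    {T : Finset (Fin m)} {t₀ : Fin m} (ht : t₀ ∉ T) :
    ∑ σ : Fin m → Bool, sSup (g T σ '' A) ≤
      ∑ σ : Fin m → Bool, sSup (g (insert t₀ T) σ '' A) := by
  classical
  haveI : Nonempty A := hne.to_subtype
  set T' := insert t₀ T with hT'
  have claim : ∀ σ : Fin m → Bool,
      sSup (g T σ '' A) + sSup (g T (flip t₀ σ) '' A) ≤
        sSup (g T' σ '' A) + sSup (g T' (flip t₀ σ) '' A) := by
    intro σ
    set u : A → ℝ := fun a =>
      ∑ t ∈ Finset.univ.erase t₀, sgn σ t * (if t ∈ T then a.1 t else |a.1 t|) with hu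
    set x : A → ℝ := fun a => a.1 t₀ with hx
    have hsum_erase : ∀ (τ : Fin m → Bool) (W : Finset (Fin m)) (a : Fin m → ℝ),
        g W τ a = sgn τ t₀ * (if t₀ ∈ W then a t₀ else |a t₀|) +
          ∑ t ∈ Finset.univ.erase t₀, sgn τ t * (if t ∈ W then a t else |a t|) :=
      fun τ W a => (Finset.add_sum_erase _ _ (Finset.mem_univ t₀)).symm
    have erase_flip : ∀ (W : Finset (Fin m)) (a : Fin m → ℝ),
        ∑ t ∈ Finset.univ.erase t₀, sgn (flip t₀ σ) t * (if t ∈ W then a t else |a t|) =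
          ∑ t ∈ Finset.univ.erase t₀, sgn σ t * (if t ∈ W then a t else |a t|) := by
      intro W a
      refine Finset.sum_congr rfl fun t htm => ?_
      rw [sgn_flip_ne t₀ σ (Finset.mem_erase.1 htm).1]
    have erase_T' : ∀ a : Fin m → ℝ,
        ∑ t ∈ Finset.univ.erase t₀, sgn σ t * (if t ∈ T' then a t else |a t|) =
          ∑ t ∈ Finset.univ.erase t₀, sgn σ t * (if t ∈ T then a t else |a t|) := by
      intro a
      refine Finset.sum_congr rfl fun t htm => ?_
      have hne' : t ≠ t₀ := (Finset.mem_erase.1 htm).1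
      rw [hT']
      simp [Finset.mem_insert, hne']
    have hgT : ∀ a : A, g T σ a.1 = u a + sgn σ t₀ * |x a| := by
      intro a
      rw [hsum_erase σ T a.1, if_neg ht]
      ring
    have hgTf : ∀ a : A, g T (flip t₀ σ) a.1 = u a - sgn σ t₀ * |x a| := by
      intro a
      rw [hsum_erase (flip t₀ σ) T a.1, if_neg ht, erase_flip, sgn_flip_self]
      ring
    have ht₀T' : t₀ ∈ T' := Finset.mem_insert_self _ _
    have hgT' : ∀ a : A, g T' σ a.1 = u a + sgn σ t₀ * x a := by
      intro a
      rw [hsum_erase σ T' a.1, if_pos ht₀T', erase_T']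
      ring
    have hgT'f : ∀ a : A, g T' (flip t₀ σ) a.1 = u a - sgn σ t₀ * x a := by
      intro a
      rw [hsum_erase (flip t₀ σ) T' a.1, if_pos ht₀T', erase_flip, erase_T', sgn_flip_self]
      ring
    have e1 : g T σ '' A = Set.range fun a : A => u a + sgn σ t₀ * |x a| := by
      rw [Set.image_eq_range]; exact congrArg Set.range (funext hgT)
    have e2 : g T (flip t₀ σ) '' A = Set.range fun a : A => u a - sgn σ t₀ * |x a| := by
      rw [Set.image_eq_range]; exact congrArg Set.range (funext hgTf)
    have e3 : g T' σ '' A = Set.range fun a : A => u a + sgn σ t₀ * x a := by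
      rw [Set.image_eq_range]; exact congrArg Set.range (funext hgT')
    have e4 : g T' (flip t₀ σ) '' A = Set.range fun a : A => u a - sgn σ t₀ * x a := by
      rw [Set.image_eq_range]; exact congrArg Set.range (funext hgT'f)
    have hb3 : BddAbove (Set.range fun a : A => u a + sgn σ t₀ * x a) := by
      rw [← e3]; exact bddAbove_g hA T' σ
    have hb4 : BddAbove (Set.range fun a : A => u a - sgn σ t₀ * x a) := by
      rw [← e4]; exact bddAbove_g hA T' (flip t₀ σ)
    rw [e1, e2, e3, e4]
    cases hε : σ t₀ with
    | true =>
      have hs1 : sgn σ t₀ = 1 := by simp [sgn, hε]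
      rw [hs1] at hb3 hb4 ⊢
      simp only [one_mul] at hb3 hb4 ⊢
      exact abs_pair_le u x hb3 hb4
    | false =>
      have hs1 : sgn σ t₀ = -1 := by simp [sgn, hε]
      rw [hs1] at hb3 hb4 ⊢
      have hrw1 : (fun a : A => u a + -1 * |x a|) = fun a : A => u a - |x a| := by
        funext a; ring
      have hrw2 : (fun a : A => u a - -1 * |x a|) = fun a : A => u a + |x a| := by
        funext a; ring
      have hrw3 : (fun a : A => u a + -1 * x a) = fun a : A => u a + -x a := by
        funext a; ring
      have hrw4 : (fun a : A => u a - -1 * x a) = fun a : A => u a - -x a := by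
        funext a; ring
      rw [hrw1, hrw2, hrw3, hrw4]
      rw [hrw3] at hb3
      rw [hrw4] at hb4
      have habs : (fun a : A => u a + |x a|) = fun a : A => u a + |(-x) a| := by
        funext a; simp
      have habs2 : (fun a : A => u a - |x a|) = fun a : A => u a - |(-x) a| := by
        funext a; simp
      have := abs_pair_le u (fun a => -x a) hb3 hb4
      simp only [Pi.neg_apply] at habs habs2
      rw [habs, habs2]
      linarith [this]
  -- now sum up
  have hflipeq : ∀ (W : Finset (Fin m)),
      ∑ σ : Fin m → Bool, sSup (g W (flip t₀ σ) '' A) =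
        ∑ σ : Fin m → Bool, sSup (g W σ '' A) :=
    fun W => Equiv.sum_comp ((flip_involutive t₀).toPerm _) (fun σ => sSup (g W σ '' A))
  have hsum := Finset.sum_le_sum (s := (Finset.univ : Finset (Fin m → Bool))) (fun σ _ => claim σ)
  rw [Finset.sum_add_distrib, Finset.sum_add_distrib, hflipeq, hflipeq] at hsum
  linarith


noncomputable def rsum (A : Set (Fin m → ℝ)) : ℝ := ∑ σ : Fin m → Bool, sSup (rs σ '' A)

lemma rs_image_eq_g_univ (σ : Fin m → Bool) (A : Set (Fin m → ℝ)) :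
    rs σ '' A = g Finset.univ σ '' A :=
  Set.image_congr fun a _ => (g_univ σ a).symm

lemma bddAbove_rs {A : Set (Fin m → ℝ)} (hA : Bdd A) (σ : Fin m → Bool) :
    BddAbove (rs σ '' A) := by
  rw [rs_image_eq_g_univ]; exact bddAbove_g hA Finset.univ σ

def absSet (A : Set (Fin m → ℝ)) : Set (Fin m → ℝ) := (fun a => fun t => |a t|) '' A

def negSet (A : Set (Fin m → ℝ)) : Set (Fin m → ℝ) := (fun a => -a) '' A

def addSet (A B : Set (Fin m → ℝ)) : Set (Fin m → ℝ) :=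
  {w | ∃ a ∈ A, ∃ b ∈ B, w = a + b}

lemma Bdd.absSet {A : Set (Fin m → ℝ)} (hA : Bdd A) : Bdd (absSet A) := by
  obtain ⟨C, hC⟩ := hA
  exact ⟨C, by rintro w ⟨a, ha, rfl⟩ t; rw [abs_abs]; exact hC a ha t⟩

lemma Bdd.negSet {A : Set (Fin m → ℝ)} (hA : Bdd A) : Bdd (negSet A) := by
  obtain ⟨C, hC⟩ := hA
  exact ⟨C, by rintro w ⟨a, ha, rfl⟩ t; simp only [Pi.neg_apply, abs_neg]; exact hC a ha t⟩

lemma Bdd.addSet {A B : Set (Fin m → ℝ)} (hA : Bdd A) (hB : Bdd B) : Bdd (addSet A B) := by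
  obtain ⟨C, hC⟩ := hA
  obtain ⟨D, hD⟩ := hB
  refine ⟨C + D, ?_⟩
  rintro w ⟨a, ha, b, hb, rfl⟩ t
  calc |(a + b) t| = |a t + b t| := by rw [Pi.add_apply]
    _ ≤ |a t| + |b t| := abs_add_le _ _
    _ ≤ C + D := add_le_add (hC a ha t) (hD b hb t)

lemma nonempty_absSet {A : Set (Fin m → ℝ)} (h : A.Nonempty) : (absSet A).Nonempty := h.image _

lemma nonempty_negSet {A : Set (Fin m → ℝ)} (h : A.Nonempty) : (negSet A).Nonempty := h.image _

lemma nonempty_addSet {A B : Set (Fin m → ℝ)} (hA : A.Nonempty) (hB : B.Nonempty) :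
    (addSet A B).Nonempty := by
  obtain ⟨a, ha⟩ := hA; obtain ⟨b, hb⟩ := hB
  exact ⟨a + b, a, ha, b, hb, rfl⟩

lemma rsum_abs_le {A : Set (Fin m → ℝ)} (hne : A.Nonempty) (hA : Bdd A) :
    rsum (absSet A) ≤ rsum A := by
  classical
  have himg : ∀ σ : Fin m → Bool, rs σ '' absSet A = g ∅ σ '' A := by
    intro σ
    unfold absSet
    rw [Set.image_image]
    exact Set.image_congr fun a _ => (g_empty σ a).symm
  have main : ∀ T : Finset (Fin m),
      (∑ σ : Fin m → Bool, sSup (g (∅ : Finset (Fin m)) σ '' A)) ≤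
        ∑ σ : Fin m → Bool, sSup (g T σ '' A) := by
    intro T
    induction T using Finset.induction_on with
    | empty => exact le_rfl
    | insert _ _ h ih => exact le_trans ih (step hne hA h)
  calc rsum (absSet A) = ∑ σ : Fin m → Bool, sSup (g ∅ σ '' A) := by
        unfold rsum; exact Finset.sum_congr rfl fun σ _ => by rw [himg σ]
    _ ≤ ∑ σ : Fin m → Bool, sSup (g Finset.univ σ '' A) := main Finset.univ
    _ = rsum A := by
        unfold rsum; exact Finset.sum_congr rfl fun σ _ => by rw [rs_image_eq_g_univ]

lemma rs_add (σ : Fin m → Bool) (a b : Fin m → ℝ) : rs σ (a + b) = rs σ a + rs σ b := by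
  unfold rs
  rw [← Finset.sum_add_distrib]
  exact Finset.sum_congr rfl fun t _ => by rw [Pi.add_apply]; ring

lemma rsum_mono {A B : Set (Fin m → ℝ)} (hne : A.Nonempty) (hB : Bdd B) (hsub : A ⊆ B) :
    rsum A ≤ rsum B := by
  refine Finset.sum_le_sum fun σ _ => ?_
  exact csSup_le_csSup (bddAbove_rs hB σ) (hne.image _) (Set.image_mono hsub)

lemma rsum_add_le {A B : Set (Fin m → ℝ)} (hneA : A.Nonempty) (hneB : B.Nonempty)
    (hA : Bdd A) (hB : Bdd B) : rsum (addSet A B) ≤ rsum A + rsum B := by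
  unfold rsum
  rw [← Finset.sum_add_distrib]
  refine Finset.sum_le_sum fun σ _ => ?_
  refine csSup_le ((nonempty_addSet hneA hneB).image _) ?_
  rintro v ⟨w, ⟨a, ha, b, hb, rfl⟩, rfl⟩
  rw [rs_add]
  exact add_le_add (le_csSup (bddAbove_rs hA σ) (Set.mem_image_of_mem _ ha))
    (le_csSup (bddAbove_rs hB σ) (Set.mem_image_of_mem _ hb))

lemma rsum_neg (A : Set (Fin m → ℝ)) : rsum (negSet A) = rsum A := by
  have hflip : ∀ (σ : Fin m → Bool) (a : Fin m → ℝ), rs σ (-a) = rs (fun t => !σ t) a := by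
    intro σ a
    exact Finset.sum_congr rfl fun t _ => by cases h : σ t <;> simp [sgn, h]
  have himg : ∀ σ : Fin m → Bool, rs σ '' negSet A = rs (fun t => !σ t) '' A := by
    intro σ
    unfold negSet
    rw [Set.image_image]
    exact Set.image_congr fun a _ => hflip σ a
  have hinv : Function.Involutive (fun (σ : Fin m → Bool) => fun t => !σ t) := by
    intro σ; funext t; simp
  calc rsum (negSet A) = ∑ σ : Fin m → Bool, sSup (rs (fun t => !σ t) '' A) :=
        Finset.sum_congr rfl fun σ _ => by rw [himg σ]
    _ = rsum A := Equiv.sum_comp (hinv.toPerm _) (fun σ => sSup (rs σ '' A))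

lemma csSup_mul_pos {c : ℝ} (hc : 0 < c) {s : Set ℝ} (hne : s.Nonempty) (hb : BddAbove s) :
    sSup ((fun y => c * y) '' s) = c * sSup s := by
  apply le_antisymm
  · refine csSup_le (hne.image _) ?_
    rintro v ⟨y, hy, rfl⟩
    exact mul_le_mul_of_nonneg_left (le_csSup hb hy) hc.le
  · have hb2 : BddAbove ((fun y => c * y) '' s) := by
      obtain ⟨M, hM⟩ := hb
      exact ⟨c * M, by rintro v ⟨y, hy, rfl⟩; exact mul_le_mul_of_nonneg_left (hM hy) hc.le⟩
    rw [mul_comm, ← le_div_iff₀ hc]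
    refine csSup_le hne fun y hy => ?_
    rw [le_div_iff₀ hc, mul_comm]
    exact le_csSup hb2 (Set.mem_image_of_mem _ hy)

def twoSet (A : Set (Fin m → ℝ)) : Set (Fin m → ℝ) := (fun a => fun t => 2 * a t) '' A

lemma rsum_two {A : Set (Fin m → ℝ)} (hne : A.Nonempty) (hA : Bdd A) :
    rsum (twoSet A) = 2 * rsum A := by
  have hrs : ∀ (σ : Fin m → Bool) (a : Fin m → ℝ),
      rs σ (fun t => 2 * a t) = 2 * rs σ a := by
    intro σ a
    unfold rs
    rw [Finset.mul_sum]
    exact Finset.sum_congr rfl fun t _ => by ring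
  have himg : ∀ σ : Fin m → Bool,
      rs σ '' twoSet A = (fun y => 2 * y) '' (rs σ '' A) := by
    intro σ
    unfold twoSet
    rw [Set.image_image, Set.image_image]
    exact Set.image_congr fun a _ => hrs σ a
  calc rsum (twoSet A) = ∑ σ : Fin m → Bool, 2 * sSup (rs σ '' A) :=
        Finset.sum_congr rfl fun σ _ => by
          rw [himg σ, csSup_mul_pos two_pos (hne.image _) (bddAbove_rs hA σ)]
    _ = 2 * rsum A := by rw [rsum, Finset.mul_sum]


lemma two_mul_max (a b : ℝ) : 2 * max a b = (a + b) + |a - b| := by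
  rcases le_total a b with h | h
  · rw [max_eq_right h, abs_of_nonpos (by linarith)]; ring
  · rw [max_eq_left h, abs_of_nonneg (by linarith)]; ring

section Main

variable {X : Type*} (S : Fin m → X) (F : Set (X → ℝ))

/-- evaluation of a function on the sample -/
def vec (f : X → ℝ) : Fin m → ℝ := fun t => f (S t)

def Nset {ι : Type*} (s : Finset ι) (hs : s.Nonempty) : Set (Fin m → ℝ) :=
  {w | ∃ fs : ι → X → ℝ, (∀ i, fs i ∈ F) ∧
    w = fun t => s.sup' hs fun i => fs i (S t)}

lemma bdd_AF {C : ℝ} (hC : ∀ h ∈ F, ∀ x : X, |h x| ≤ C) : Bdd (vec S '' F) := by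
  exact ⟨C, by rintro w ⟨f, hf, rfl⟩ t; exact hC f hf (S t)⟩

lemma bdd_Nset {C : ℝ} (hC : ∀ h ∈ F, ∀ x : X, |h x| ≤ C)
    {ι : Type*} (s : Finset ι) (hs : s.Nonempty) : Bdd (Nset S F s hs) := by
  refine ⟨C, ?_⟩
  rintro w ⟨fs, hfs, rfl⟩ t
  dsimp only
  rw [abs_le]
  constructor
  · obtain ⟨i, hi⟩ := hs
    calc -C ≤ fs i (S t) := (abs_le.1 (hC _ (hfs i) (S t))).1
      _ ≤ _ := Finset.le_sup' (fun j => fs j (S t)) hi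
  · exact Finset.sup'_le _ _ fun i _ => (abs_le.1 (hC _ (hfs i) (S t))).2

lemma nonempty_Nset (hF : F.Nonempty) {ι : Type*} (s : Finset ι) (hs : s.Nonempty) :
    (Nset S F s hs).Nonempty := by
  obtain ⟨f, hf⟩ := hF
  exact ⟨_, fun _ => f, fun _ => hf, rfl⟩

lemma Nset_singleton {ι : Type*} (i : ι) :
    Nset S F ({i} : Finset ι) (Finset.singleton_nonempty i) = vec S '' F := by
  ext w
  constructor
  · rintro ⟨fs, hfs, rfl⟩
    exact ⟨fs i, hfs i, by funext t; rw [Finset.sup'_singleton]; rfl⟩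
  · rintro ⟨f, hf, rfl⟩
    exact ⟨fun _ => f, fun _ => hf, by funext t; rw [Finset.sup'_singleton]; rfl⟩

lemma rsum_Nset_le {C : ℝ} (hC : ∀ h ∈ F, ∀ x : X, |h x| ≤ C)
    (hF : F.Nonempty) {ι : Type*} (s : Finset ι) (hs : s.Nonempty) :
    rsum (Nset S F s hs) ≤ s.card * rsum (vec S '' F) := by
  induction hs using Finset.Nonempty.cons_induction with
  | singleton i =>
    rw [Nset_singleton]
    simp
  | cons i s hi hs ih =>
    have hAF : Bdd (vec S '' F) := bdd_AF S F hC
    have hN : Bdd (Nset S F s hs) := bdd_Nset S F hC s hs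
    have hneAF : (vec S '' F).Nonempty := hF.image _
    have hneN : (Nset S F s hs).Nonempty := nonempty_Nset S F hF s hs
    have hneN' : (Nset S F (Finset.cons i s hi) (Finset.cons_nonempty hi)).Nonempty :=
      nonempty_Nset S F hF _ _
    have hN' : Bdd (Nset S F (Finset.cons i s hi) (Finset.cons_nonempty hi)) :=
      bdd_Nset S F hC _ _
    set D : Set (Fin m → ℝ) := addSet (Nset S F s hs) (negSet (vec S '' F)) with hD
    have hDbdd : Bdd D := hN.addSet (bdd_AF S F hC).negSet
    have hDne : D.Nonempty := nonempty_addSet hneN (hneAF.image _)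
    set P : Set (Fin m → ℝ) := addSet (addSet (Nset S F s hs) (vec S '' F)) (absSet D) with hP
    have hPbdd : Bdd P := (hN.addSet hAF).addSet hDbdd.absSet
    have hsub : twoSet (Nset S F (Finset.cons i s hi) (Finset.cons_nonempty hi)) ⊆ P := by
      rintro w2 ⟨w, ⟨fs, hfs, rfl⟩, rfl⟩
      set u : Fin m → ℝ := fun t => s.sup' hs fun j => fs j (S t) with hu
      set v : Fin m → ℝ := vec S (fs i) with hv
      refine ⟨u + v, ⟨u, ⟨fs, hfs, rfl⟩, v, ⟨fs i, hfs i, rfl⟩, rfl⟩,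
        fun t => |(u + -v) t|, ⟨u + -v, ⟨u, ⟨fs, hfs, rfl⟩, -v, ⟨v, ⟨fs i, hfs i, rfl⟩, rfl⟩, rfl⟩, rfl⟩, ?_⟩
      funext t
      simp only [Pi.add_apply, Pi.neg_apply]
      rw [Finset.sup'_cons hs]
      have := two_mul_max (fs i (S t)) (s.sup' hs fun j => fs j (S t))
      have hv' : v t = fs i (S t) := rfl
      have hu' : u t = s.sup' hs fun j => fs j (S t) := rfl
      rw [abs_sub_comm] at this
      calc 2 * max (fs i (S t)) (s.sup' hs fun j => fs j (S t))
          = (fs i (S t) + (s.sup' hs fun j => fs j (S t))) +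
            |(s.sup' hs fun j => fs j (S t)) - fs i (S t)| := this
        _ = u t + v t + |u t + -v t| := by rw [hv', hu']; ring_nf
    have h1 : rsum (twoSet (Nset S F (Finset.cons i s hi) (Finset.cons_nonempty hi)))
        = 2 * rsum (Nset S F (Finset.cons i s hi) (Finset.cons_nonempty hi)) :=
      rsum_two hneN' hN'
    have h2 : rsum (twoSet (Nset S F (Finset.cons i s hi) (Finset.cons_nonempty hi))) ≤ rsum P :=
      rsum_mono (hneN'.image _) hPbdd hsub
    have h3 : rsum P ≤ rsum (addSet (Nset S F s hs) (vec S '' F)) + rsum (absSet D) :=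
      rsum_add_le (nonempty_addSet hneN hneAF) (nonempty_absSet hDne) (hN.addSet hAF) hDbdd.absSet
    have h4 : rsum (addSet (Nset S F s hs) (vec S '' F)) ≤
        rsum (Nset S F s hs) + rsum (vec S '' F) := rsum_add_le hneN hneAF hN hAF
    have h5 : rsum (absSet D) ≤ rsum D := rsum_abs_le hDne hDbdd
    have h6 : rsum D ≤ rsum (Nset S F s hs) + rsum (negSet (vec S '' F)) :=
      rsum_add_le hneN (hneAF.image _) hN hAF.negSet
    have h7 : rsum (negSet (vec S '' F)) = rsum (vec S '' F) := rsum_neg _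
    have hcard : ((Finset.cons i s hi).card : ℝ) = s.card + 1 := by
      rw [Finset.card_cons]; push_cast; ring
    rw [hcard]
    nlinarith [ih]

lemma rademacher_eq [NeZero m] (H : Set (X → ℝ)) (hne : H.Nonempty)
    (hB : Bdd (vec S '' H)) :
    rademacher m S H = (m : ℝ)⁻¹ * rsum (vec S '' H) / 2 ^ m := by
  have hm : (0 : ℝ) < (m : ℝ)⁻¹ := by
    have := NeZero.pos m
    positivity
  unfold rademacher
  congr 1
  rw [rsum, Finset.mul_sum]
  refine Finset.sum_congr rfl fun σ _ => ?_
  have hset : {v : ℝ | ∃ h ∈ H, v = (m : ℝ)⁻¹ * ∑ t, (if σ t then (1:ℝ) else -1) * h (S t)}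
      = (fun y => (m : ℝ)⁻¹ * y) '' (rs σ '' (vec S '' H)) := by
    ext v
    constructor
    · rintro ⟨h, hH, rfl⟩
      exact ⟨rs σ (vec S h), ⟨vec S h, ⟨h, hH, rfl⟩, rfl⟩, rfl⟩
    · rintro ⟨y, ⟨a, ⟨h, hH, rfl⟩, rfl⟩, rfl⟩
      exact ⟨h, hH, rfl⟩
  rw [hset, csSup_mul_pos hm ((hne.image _).image _) (bddAbove_rs hB σ)]

end Main

end RadMax

/-- Rademacher complexity of maxima: for
`G = { x ↦ max(f_1(x), …, f_k(x)) : f_1, …, f_k ∈ F }`, `R̂_S(G) ≤ k · R̂_S(F)`. -/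
theorem rademacher_max_le {X : Type*} (m k : ℕ) [NeZero m] [NeZero k]
    (S : Fin m → X) (F : Set (X → ℝ)) (hF : F.Nonempty)
    (C : ℝ) (hC : ∀ h ∈ F, ∀ x : X, |h x| ≤ C) :
    rademacher m S {g : X → ℝ | ∃ fs : Fin k → X → ℝ, (∀ i, fs i ∈ F) ∧
        g = fun x => Finset.univ.sup' Finset.univ_nonempty fun i => fs i x}
      ≤ (k : ℝ) * rademacher m S F := by
  classical
  open RadMax in
  set G : Set (X → ℝ) := {g : X → ℝ | ∃ fs : Fin k → X → ℝ, (∀ i, fs i ∈ F) ∧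
      g = fun x => Finset.univ.sup' Finset.univ_nonempty fun i => fs i x} with hG
  obtain ⟨f₀, hf₀⟩ := hF
  have hGne : G.Nonempty :=
    ⟨_, fun _ => f₀, fun _ => hf₀, rfl⟩
  have hvecG : vec S '' G = Nset S F (Finset.univ : Finset (Fin k)) Finset.univ_nonempty := by
    ext w
    constructor
    · rintro ⟨g', ⟨fs, hfs, rfl⟩, rfl⟩
      exact ⟨fs, hfs, rfl⟩
    · rintro ⟨fs, hfs, rfl⟩
      exact ⟨_, ⟨fs, hfs, rfl⟩, rfl⟩
  have hbddF : Bdd (vec S '' F) := bdd_AF S F hC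
  have hbddG : Bdd (vec S '' G) := by
    rw [hvecG]; exact bdd_Nset S F hC _ _
  rw [rademacher_eq S G hGne hbddG, rademacher_eq S F ⟨f₀, hf₀⟩ hbddF]
  have key : rsum (vec S '' G) ≤ (k : ℝ) * rsum (vec S '' F) := by
    rw [hvecG]
    have := rsum_Nset_le S F hC ⟨f₀, hf₀⟩ (Finset.univ : Finset (Fin k)) Finset.univ_nonempty
    simpa using this
  have hm : (0 : ℝ) ≤ (m : ℝ)⁻¹ := by positivity
  calc (m : ℝ)⁻¹ * rsum (vec S '' G) / 2 ^ m
      ≤ (m : ℝ)⁻¹ * ((k : ℝ) * rsum (vec S '' F)) / 2 ^ m := by gcongr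
    _ = (k : ℝ) * ((m : ℝ)⁻¹ * rsum (vec S '' F) / 2 ^ m) := by ring
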